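/- Let H be a non-empty graph. If the vertex of K_1 does not belong to any local metric basis of the join K_1 + H, then for any connected graph G of order n, dim_l(G ⊙ H) = n·dim_l(K_1 + H). -/

import Mathlib

open SimpleGraph

/-- A set `S` is a local metric generator for `G` if every pair of adjacent
vertices is distinguished, by distance, by some element of `S`. -/
def IsLocalMetricGenerator {V : Type*} (G : SimpleGraph V) (S : Set V) : Prop :=
  ∀ ⦃u v : V⦄, G.Adj u v → ∃ w ∈ S, G.dist u w ≠ G.dist v w

/-- The local metric dimension of a graph. -/
noncomputable def localMetricDim {V : Type*} [Fintype V] (G : SimpleGraph V) : ℕ :=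
  sInf {k | ∃ S : Finset V, IsLocalMetricGenerator G ↑S ∧ S.card = k}

/-- A local metric basis: a local metric generator of minimum cardinality. -/
def IsLocalMetricBasis {V : Type*} [Fintype V] (G : SimpleGraph V) (S : Finset V) : Prop :=
  IsLocalMetricGenerator G ↑S ∧ S.card = localMetricDim G

/-- The join K₁ + H: a new vertex (`none`) adjacent to all vertices of H. -/
def oneJoin {W : Type*} (H : SimpleGraph W) : SimpleGraph (Option W) :=
  SimpleGraph.fromRel (fun a b => match a, b with
    | none, some _ => True
    | some x, some y => H.Adj x y
    | _, _ => False)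

/-- The corona product G ⊙ H: one copy of G and a copy of H for each vertex
i of G, with i joined to every vertex of its copy of H. -/
def corona {V W : Type*} (G : SimpleGraph V) (H : SimpleGraph W) :
    SimpleGraph (V ⊕ V × W) :=
  SimpleGraph.fromRel (fun a b => match a, b with
    | .inl u, .inl w => G.Adj u w
    | .inr p, .inr q => p.1 = q.1 ∧ H.Adj p.2 q.2
    | .inl u, .inr p => u = p.1
    | .inr _, .inl _ => False)

namespace CoronaProof
open Sum

variable {V W : Type*} {G : SimpleGraph V} {H : SimpleGraph W}

lemma oneJoin_adj_none_some (w : W) : (oneJoin H).Adj none (some w) := by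
  simp [oneJoin, fromRel_adj]

lemma oneJoin_adj_some_some {w w' : W} :
    (oneJoin H).Adj (some w) (some w') ↔ H.Adj w w' := by
  constructor
  · rintro ⟨hne, h | h⟩
    · exact h
    · exact h.symm
  · intro h
    exact ⟨by simpa using h.ne, Or.inl h⟩

lemma corona_adj_inl_inl {u v : V} :
    (corona G H).Adj (inl u) (inl v) ↔ G.Adj u v := by
  constructor
  · rintro ⟨hne, h | h⟩
    · exact h
    · exact h.symm
  · intro h
    exact ⟨by simpa using h.ne, Or.inl h⟩

lemma corona_adj_inl_inr {u : V} {p : V × W} :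
    (corona G H).Adj (inl u) (inr p) ↔ u = p.1 := by
  constructor
  · rintro ⟨hne, h | h⟩
    · exact h
    · exact h.elim
  · intro h
    exact ⟨by simp, Or.inl h⟩

lemma corona_adj_inr_inl {u : V} {p : V × W} :
    (corona G H).Adj (inr p) (inl u) ↔ p.1 = u := by
  rw [adj_comm, corona_adj_inl_inr]
  exact eq_comm

lemma corona_adj_inr_inr {p q : V × W} :
    (corona G H).Adj (inr p) (inr q) ↔ p.1 = q.1 ∧ H.Adj p.2 q.2 := by
  constructor
  · rintro ⟨hne, h | h⟩
    · exact h
    · exact ⟨h.1.symm, h.2.symm⟩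
  · rintro ⟨h1, h2⟩
    refine ⟨?_, Or.inl ⟨h1, h2⟩⟩
    intro hpq
    rw [inr.injEq] at hpq
    exact h2.ne (by rw [hpq])

lemma oneJoin_connected (H : SimpleGraph W) : (oneJoin H).Connected := by
  have key : ∀ x : Option W, (oneJoin H).Reachable x none := by
    rintro (_ | w)
    · exact Reachable.refl _
    · exact (oneJoin_adj_none_some w).symm.reachable
  rw [connected_iff]
  exact ⟨fun x y => (key x).trans (key y).symm, ⟨none⟩⟩

def inlHom (G : SimpleGraph V) (H : SimpleGraph W) : G →g corona G H :=
  ⟨inl, fun h => corona_adj_inl_inl.2 h⟩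

lemma corona_connected (hG : G.Connected) (H : SimpleGraph W) :
    (corona G H).Connected := by
  have key : ∀ x : V ⊕ V × W, ∃ u : V, (corona G H).Reachable x (inl u) := by
    rintro (u | p)
    · exact ⟨u, Reachable.refl _⟩
    · exact ⟨p.1, (corona_adj_inr_inl.2 rfl).reachable⟩
  rw [connected_iff]
  refine ⟨fun x y => ?_, ?_⟩
  · obtain ⟨u, hu⟩ := key x
    obtain ⟨v, hv⟩ := key y
    exact hu.trans (((hG.preconnected u v).map (inlHom G H)).trans hv.symm)
  · obtain ⟨v⟩ := hG.nonempty
    exact ⟨inl v⟩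

def proj : V ⊕ V × W → V := Sum.elim id Prod.fst

open Classical in
noncomputable def iota : V ⊕ V × W → V ⊕ V × W → ℕ := fun x y =>
  match x, y with
  | inl _, inl _ => 0
  | inr p, inr q => if p.1 = q.1 then 0 else 2
  | _, _ => 1

lemma length_lb (hG : G.Connected) {x y : V ⊕ V × W} (p : (corona G H).Walk x y) :
    G.dist (proj x) (proj y) + iota x y ≤ p.length := by
  induction p with
  | @nil a =>
    rcases a with u | p <;> simp [proj, iota]
  | @cons x z y h q ih =>
    rw [Walk.length_cons]
    rcases x with u | ⟨u, w⟩ <;> rcases z with u' | ⟨u', w'⟩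
    · -- inl / inl : G-edge
      have hadj : G.Adj u u' := corona_adj_inl_inl.1 h
      have hio : iota (inl u : V ⊕ V × W) y = iota (inl u') y := by
        rcases y with v | q <;> rfl
      have ht := hG.dist_triangle (u := u) (v := u') (w := proj y)
      have h1 : G.dist u u' ≤ 1 := le_of_eq (dist_eq_one_iff_adj.2 hadj)
      simp only [proj, Sum.elim_inl, id] at *
      omega
    · -- inl / inr
      have he : u = u' := by have := corona_adj_inl_inr.1 h; simpa using this
      subst he
      have hio : iota (inl u : V ⊕ V × W) y ≤ iota (inr (u, w') : V ⊕ V × W) y + 1 := by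
        rcases y with v | q <;> simp [iota] <;> split_ifs <;> omega
      simp only [proj, Sum.elim_inl, Sum.elim_inr, id] at *
      omega
    · -- inr / inl
      have he : u = u' := corona_adj_inr_inl.1 h
      subst he
      have hio : iota (inr (u, w) : V ⊕ V × W) y ≤ iota (inl u : V ⊕ V × W) y + 1 := by
        rcases y with v | q <;> simp [iota] <;> split_ifs <;> omega
      simp only [proj, Sum.elim_inl, Sum.elim_inr, id] at *
      omega
    · -- inr / inr
      have he : u = u' := (corona_adj_inr_inr.1 h).1
      subst he
      have hio : iota (inr (u, w) : V ⊕ V × W) y = iota (inr (u, w') : V ⊕ V × W) y := by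
        rcases y with v | q <;> rfl
      simp only [proj, Sum.elim_inr] at *
      omega

open Classical in
noncomputable def d2 (H : SimpleGraph W) (w w' : W) : ℕ :=
  if w = w' then 0 else if H.Adj w w' then 1 else 2

lemma Jdist_none_some (w : W) : (oneJoin H).dist none (some w) = 1 :=
  dist_eq_one_iff_adj.2 (oneJoin_adj_none_some w)

lemma Jdist_some_some (w w' : W) :
    (oneJoin H).dist (some w) (some w') = d2 H w w' := by
  classical
  unfold d2
  split_ifs with h1 h2
  · subst h1; exact dist_self
  · exact dist_eq_one_iff_adj.2 (oneJoin_adj_some_some.2 h2)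
  · have hle : (oneJoin H).dist (some w) (some w') ≤ 2 := by
      refine le_trans (dist_le (Walk.cons (oneJoin_adj_none_some w).symm
        (Walk.cons (oneJoin_adj_none_some w') (Walk.nil' (some w'))))) ?_
      simp
    have h0 : (oneJoin H).dist (some w) (some w') ≠ 0 := by
      intro h
      exact h1 (by simpa using ((oneJoin_connected H).dist_eq_zero_iff).1 h)
    have hone : (oneJoin H).dist (some w) (some w') ≠ 1 := by
      intro h
      exact h2 (oneJoin_adj_some_some.1 (dist_eq_one_iff_adj.1 h))
    omega

lemma dist_inl_inl (hG : G.Connected) (u v : V) :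
    (corona G H).dist (inl u) (inl v) = G.dist u v := by
  refine le_antisymm ?_ ?_
  · obtain ⟨p, hp⟩ := hG.exists_walk_length_eq_dist u v
    calc (corona G H).dist (inl u) (inl v) ≤ (p.map (inlHom G H)).length := dist_le _
    _ = G.dist u v := by rw [Walk.length_map, hp]
  · obtain ⟨q, hq⟩ := (corona_connected hG H).exists_walk_length_eq_dist (inl u) (inl v)
    have := length_lb hG q
    rw [hq] at this
    simpa [proj, iota] using this

lemma dist_inl_inr (hG : G.Connected) (u v : V) (w : W) :
    (corona G H).dist (inl u) (inr (v, w)) = G.dist u v + 1 := by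
  refine le_antisymm ?_ ?_
  · obtain ⟨p, hp⟩ := hG.exists_walk_length_eq_dist u v
    have hadj : (corona G H).Adj (inl v) (inr (v, w)) := corona_adj_inl_inr.2 rfl
    calc (corona G H).dist (inl u) (inr (v, w))
        ≤ ((p.map (inlHom G H)).concat hadj).length := dist_le _
    _ = G.dist u v + 1 := (Walk.length_concat _ _).trans (by rw [Walk.length_map, hp])
  · obtain ⟨q, hq⟩ := (corona_connected hG H).exists_walk_length_eq_dist (inl u) (inr (v, w))
    have := length_lb hG q
    rw [hq] at this
    simpa [proj, iota] using this

lemma dist_inr_inl (hG : G.Connected) (u v : V) (w : W) :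
    (corona G H).dist (inr (u, w)) (inl v) = G.dist u v + 1 := by
  rw [dist_comm, dist_inl_inr hG, G.dist_comm]

lemma dist_inr_inr_same (hG : G.Connected) (u : V) (w w' : W) :
    (corona G H).dist (inr (u, w)) (inr (u, w')) = d2 H w w' := by
  classical
  unfold d2
  split_ifs with h1 h2
  · subst h1; exact dist_self
  · exact dist_eq_one_iff_adj.2 (corona_adj_inr_inr.2 ⟨rfl, h2⟩)
  · have ha1 : (corona G H).Adj (inr (u, w)) (inl u) := corona_adj_inr_inl.2 rfl
    have ha2 : (corona G H).Adj (inl u) (inr (u, w')) := corona_adj_inl_inr.2 rfl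
    have hle : (corona G H).dist (inr (u, w)) (inr (u, w')) ≤ 2 := by
      refine le_trans (dist_le (Walk.cons ha1 (Walk.cons ha2 (Walk.nil' (inr (u, w')))))) ?_
      simp
    have h0 : (corona G H).dist (inr (u, w)) (inr (u, w')) ≠ 0 := by
      intro h
      exact h1 (by simpa using ((corona_connected hG H).dist_eq_zero_iff).1 h)
    have hone : (corona G H).dist (inr (u, w)) (inr (u, w')) ≠ 1 := by
      intro h
      exact h2 ((corona_adj_inr_inr.1 (dist_eq_one_iff_adj.1 h)).2)
    omega

lemma dist_inr_inr_ne (hG : G.Connected) {u v : V} (huv : u ≠ v) (w w' : W) :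
    (corona G H).dist (inr (u, w)) (inr (v, w')) = G.dist u v + 2 := by
  refine le_antisymm ?_ ?_
  · obtain ⟨p, hp⟩ := hG.exists_walk_length_eq_dist u v
    have h1 : (corona G H).Adj (inr (u, w)) (inl u) := corona_adj_inr_inl.2 rfl
    have h2 : (corona G H).Adj (inl v) (inr (v, w')) := corona_adj_inl_inr.2 rfl
    calc (corona G H).dist (inr (u, w)) (inr (v, w'))
        ≤ (Walk.cons h1 ((p.map (inlHom G H)).concat h2)).length := dist_le _
    _ = G.dist u v + 2 := by
        have e : ((p.map (inlHom G H)).concat h2).length = G.dist u v + 1 :=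
          (Walk.length_concat _ _).trans (by rw [Walk.length_map, hp])
        exact congrArg (· + 1) e
  · obtain ⟨q, hq⟩ := (corona_connected hG H).exists_walk_length_eq_dist
      (inr (u, w)) (inr (v, w'))
    have := length_lb hG q
    rw [hq] at this
    simpa [proj, iota, huv] using this

lemma univ_generator {V' : Type*} [Fintype V'] (G' : SimpleGraph V') :
    IsLocalMetricGenerator G' ↑(Finset.univ : Finset V') := by
  intro u v h
  refine ⟨u, by simp, ?_⟩
  rw [dist_self, dist_eq_one_iff_adj.2 h.symm]
  simp

lemma exists_basis {V' : Type*} [Fintype V'] (G' : SimpleGraph V') :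
    ∃ S : Finset V', IsLocalMetricBasis G' S := by
  have hne : {k | ∃ S : Finset V', IsLocalMetricGenerator G' ↑S ∧ S.card = k}.Nonempty :=
    ⟨_, Finset.univ, univ_generator G', rfl⟩
  obtain ⟨S, hS, hcard⟩ := Nat.sInf_mem hne
  exact ⟨S, hS, hcard⟩

lemma dim_le {V' : Type*} [Fintype V'] {G' : SimpleGraph V'} {S : Finset V'}
    (h : IsLocalMetricGenerator G' ↑S) : localMetricDim G' ≤ S.card :=
  Nat.sInf_le ⟨S, h, rfl⟩

lemma le_dim_of_forall {V' : Type*} [Fintype V'] {G' : SimpleGraph V'} {n : ℕ}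
    (h : ∀ S : Finset V', IsLocalMetricGenerator G' ↑S → n ≤ S.card) :
    n ≤ localMetricDim G' := by
  obtain ⟨S, hS, hc⟩ := exists_basis G'
  exact hc ▸ h S hS

lemma one_le_dim {V' : Type*} [Fintype V'] {G' : SimpleGraph V'}
    (he : ∃ a b, G'.Adj a b) : 1 ≤ localMetricDim G' := by
  refine le_dim_of_forall fun S hS => ?_
  obtain ⟨a, b, hab⟩ := he
  obtain ⟨w, hw, -⟩ := hS hab
  exact Finset.card_pos.2 ⟨w, hw⟩


open Sum in
theorem main {V W : Type*} [Fintype V] [Fintype W]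
    (G : SimpleGraph V) (H : SimpleGraph W) (hG : G.Connected)
    (hne : H.edgeSet.Nonempty)
    (hv : ∀ B : Finset (Option W), IsLocalMetricBasis (oneJoin H) B → none ∉ B) :
    localMetricDim (corona G H) = Fintype.card V * localMetricDim (oneJoin H) := by
  classical
  have hJedge : ∃ a b : Option W, (oneJoin H).Adj a b := by
    obtain ⟨e, he⟩ := hne
    induction e using Sym2.ind with
    | _ a b => exact ⟨none, some a, oneJoin_adj_none_some a⟩
  have hdim1 : 1 ≤ localMetricDim (oneJoin H) := one_le_dim hJedge
  refine le_antisymm ?_ ?_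
  · -- upper bound
    obtain ⟨B, hBgen, hBcard⟩ := exists_basis (oneJoin H)
    have hnone : none ∉ B := hv B ⟨hBgen, hBcard⟩
    set B₀ : Finset W := Finset.univ.filter (fun w => some w ∈ B) with hB₀
    have hB₀mem : ∀ w : W, w ∈ B₀ ↔ some w ∈ B := by simp [hB₀]
    have hB₀card : B₀.card = localMetricDim (oneJoin H) := by
      rw [← hBcard]
      have : B = B₀.image some := by
        ext o
        cases o with
        | none => simp [hnone]
        | some w => simp [hB₀mem]
      rw [this, Finset.card_image_of_injective _ (Option.some_injective W)]
    set S : Finset (V ⊕ V × W) := (Finset.univ ×ˢ B₀).image Sum.inr with hS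
    have hSmem : ∀ (u : V) (w : W), (inr (u, w) : V ⊕ V × W) ∈ S ↔ w ∈ B₀ := by
      intro u w; simp [hS]
    have hScard : S.card = Fintype.card V * localMetricDim (oneJoin H) := by
      rw [hS, Finset.card_image_of_injective _ Sum.inr_injective, Finset.card_product,
        Finset.card_univ, hB₀card]
    have hSgen : IsLocalMetricGenerator (corona G H) ↑S := by
      intro a b hab
      rcases a with u | ⟨u, w⟩ <;> rcases b with v | ⟨v, w'⟩
      · -- inl inl
        have hadj := corona_adj_inl_inl.1 hab
        obtain ⟨b₀, hb₀⟩ : B₀.Nonempty := Finset.card_pos.1 (by omega)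
        refine ⟨inr (u, b₀), by simpa [hSmem] using hb₀, ?_⟩
        rw [dist_inl_inr hG, dist_inl_inr hG, SimpleGraph.dist_self]
        have : G.dist v u ≠ 0 := fun h => hadj.ne' (hG.dist_eq_zero_iff.1 h)
        omega
      · -- inl u, inr (v, w')
        have huv : u = v := by simpa using corona_adj_inl_inr.1 hab
        subst huv
        obtain ⟨o, hoB, hdist⟩ := hBgen (oneJoin_adj_none_some w')
        rcases o with _ | b
        · exact absurd hoB hnone
        refine ⟨inr (u, b), by simp [hSmem, (hB₀mem b).2 hoB], ?_⟩
        rw [dist_inl_inr hG, dist_inr_inr_same hG, SimpleGraph.dist_self]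
        rw [Jdist_none_some, Jdist_some_some] at hdist
        simpa using hdist
      · -- inr (u, w), inl v
        have huv : u = v := by simpa using corona_adj_inr_inl.1 hab
        subst huv
        obtain ⟨o, hoB, hdist⟩ := hBgen (oneJoin_adj_none_some w)
        rcases o with _ | b
        · exact absurd hoB hnone
        refine ⟨inr (u, b), by simp [hSmem, (hB₀mem b).2 hoB], ?_⟩
        rw [dist_inl_inr hG, dist_inr_inr_same hG, SimpleGraph.dist_self]
        rw [Jdist_none_some, Jdist_some_some] at hdist
        intro h
        exact hdist (by omega)
      · -- inr inr
        obtain ⟨h1, h2⟩ := corona_adj_inr_inr.1 hab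
        simp only at h1 h2
        subst h1
        obtain ⟨o, hoB, hdist⟩ := hBgen (oneJoin_adj_some_some.2 h2)
        rcases o with _ | b
        · exact absurd hoB hnone
        refine ⟨inr (u, b), by simp [hSmem, (hB₀mem b).2 hoB], ?_⟩
        rw [dist_inr_inr_same hG, dist_inr_inr_same hG]
        rw [Jdist_some_some, Jdist_some_some] at hdist
        exact hdist
    calc localMetricDim (corona G H) ≤ S.card := dim_le hSgen
    _ = _ := hScard
  · -- lower bound
    refine le_dim_of_forall fun S hSgen => ?_
    have key : ∀ u : V, localMetricDim (oneJoin H) ≤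
        (Finset.univ.filter (fun w => (inr (u, w) : V ⊕ V × W) ∈ S)).card := by
      intro u
      set Tu : Finset W := Finset.univ.filter (fun w => (inr (u, w) : V ⊕ V × W) ∈ S) with hTu
      set B : Finset (Option W) := insert none (Tu.image some) with hB
      have hgen : IsLocalMetricGenerator (oneJoin H) ↑B := by
        intro a b hab
        rcases a with _ | w <;> rcases b with _ | w'
        · exact absurd hab (oneJoin H).irrefl
        · refine ⟨none, by simp [hB], ?_⟩
          rw [SimpleGraph.dist_self, (oneJoin H).dist_comm, Jdist_none_some]
          simp
        · refine ⟨none, by simp [hB], ?_⟩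
          rw [SimpleGraph.dist_self, (oneJoin H).dist_comm, Jdist_none_some]
          simp
        · have hH : H.Adj w w' := oneJoin_adj_some_some.1 hab
          have hCadj : (corona G H).Adj (inr (u, w)) (inr (u, w')) :=
            corona_adj_inr_inr.2 ⟨rfl, hH⟩
          obtain ⟨s, hsS, hd⟩ := hSgen hCadj
          rcases s with v | ⟨v, b⟩
          · rw [dist_inr_inl hG, dist_inr_inl hG] at hd
            exact absurd rfl hd
          · by_cases hvu : u = v
            · subst hvu
              rw [dist_inr_inr_same hG, dist_inr_inr_same hG] at hd
              have hsS' : (inr (u, b) : V ⊕ V × W) ∈ S := hsS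
              refine ⟨some b, by simp [hB, hTu, hsS'], ?_⟩
              rw [Jdist_some_some, Jdist_some_some]
              exact hd
            · rw [dist_inr_inr_ne hG hvu, dist_inr_inr_ne hG hvu] at hd
              exact absurd rfl hd
      have hcard : B.card = Tu.card + 1 := by
        rw [hB, Finset.card_insert_of_notMem (by simp),
          Finset.card_image_of_injective _ (Option.some_injective W)]
      have hle : localMetricDim (oneJoin H) ≤ Tu.card + 1 := hcard ▸ dim_le hgen
      by_contra hlt
      push_neg at hlt
      have hBcard' : B.card = localMetricDim (oneJoin H) := by omega
      exact (hv B ⟨hgen, hBcard'⟩) (by simp [hB])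
    set T : Finset (V × W) := Finset.univ.filter (fun p => (inr p : V ⊕ V × W) ∈ S) with hT
    have h1 : T.card ≤ S.card := by
      refine Finset.card_le_card_of_injOn (fun p => inr p) ?_ ?_
      · intro p hp
        simpa [hT] using hp
      · intro p _ q _ h
        exact Sum.inr_injective h
    have h2 : T.card = ∑ u : V,
        (Finset.univ.filter (fun w => (inr (u, w) : V ⊕ V × W) ∈ S)).card := by
      rw [Finset.card_eq_sum_card_fiberwise (f := Prod.fst) (t := Finset.univ) (by simp)]
      refine Finset.sum_congr rfl fun u _ => ?_
      refine Finset.card_bij' (fun p _ => p.2) (fun w _ => (u, w)) ?_ ?_ ?_ ?_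
      · rintro ⟨a, b⟩ hp
        simp only [hT, Finset.mem_filter, Finset.mem_univ, true_and] at hp
        obtain ⟨hp1, hp2⟩ := hp
        subst hp2
        simpa using hp1
      · intro w hw
        simp only [Finset.mem_filter, Finset.mem_univ, true_and] at hw
        simp [hT, hw]
      · rintro ⟨a, b⟩ hp
        simp only [hT, Finset.mem_filter] at hp
        simp [hp.2]
      · intro w hw
        rfl
    calc Fintype.card V * localMetricDim (oneJoin H)
        = ∑ _u : V, localMetricDim (oneJoin H) := by
          rw [Finset.sum_const, Finset.card_univ, smul_eq_mul]
    _ ≤ ∑ u : V, (Finset.univ.filter (fun w => (inr (u, w) : V ⊕ V × W) ∈ S)).card :=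
          Finset.sum_le_sum fun u _ => key u
    _ = T.card := h2.symm
    _ ≤ S.card := h1

end CoronaProof

/-- If the vertex of K₁ belongs to no local metric basis of K₁ + H (H a
non-empty graph), then dim_l(G ⊙ H) = n · dim_l(K₁ + H) for every connected
graph G of order n. -/
theorem localMetricDim_corona_of_not_mem {V W : Type*} [Fintype V] [Fintype W]
    (G : SimpleGraph V) (H : SimpleGraph W) (hG : G.Connected)
    (hne : H.edgeSet.Nonempty)
    (hv : ∀ B : Finset (Option W), IsLocalMetricBasis (oneJoin H) B → none ∉ B) :
    localMetricDim (corona G H) = Fintype.card V * localMetricDim (oneJoin H) :=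
  CoronaProof.main G H hG hne hv
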